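/- Let A be an n×n block-partitioned real matrix, Q a symmetric positive definite n×n matrix, M > 0, and let μ satisfy 0 < μ < λ_min(Q)/(2M), where λ_min(Q) is the smallest eigenvalue of Q. Suppose D ∈ D_blk and P is a symmetric positive definite matrix satisfying Aᵀ D P + P D A = −Q and ‖P D‖ ≤ M. Then for every n×n real matrix B with ‖B‖ ≤ μ, the matrix D(A + B) is Hurwitz. -/

import Mathlib

open Matrix

/-- A square real matrix is Hurwitz if every eigenvalue of it, viewed as a complex
matrix, has strictly negative real part. -/
def IsHurwitz {m : Type*} [Fintype m] [DecidableEq m] (M : Matrix m m ℝ) : Prop :=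
  ∀ μ ∈ spectrum ℂ (M.map (algebraMap ℝ ℂ)), μ.re < 0

/-- The operator 2-norm of a square real matrix. -/
noncomputable def opNorm2 {m : Type*} [Fintype m] [DecidableEq m] (M : Matrix m m ℝ) : ℝ :=
  ‖Matrix.toEuclideanCLM (𝕜 := ℝ) M‖

/-- A block-partitioned square real matrix (blocks indexed by `ι`, the `i`-th block of
size `n i`) is block D-stable if `D * A` is Hurwitz for every positive block-diagonal
scaling `D = blkdiag (d 1 • I, …, d N • I)`. -/
def BlockDStable {ι : Type*} [Fintype ι] [DecidableEq ι] {n : ι → ℕ}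
    (A : Matrix ((i : ι) × Fin (n i)) ((i : ι) × Fin (n i)) ℝ) : Prop :=
  ∀ d : ι → ℝ, (∀ i, 0 < d i) →
    IsHurwitz (Matrix.diagonal (fun p => d p.1) * A)

/-- A block-partitioned square real matrix is robustly block D-stable if all
sufficiently small (in operator 2-norm) perturbations of it are block D-stable. -/
def RobustBlockDStable {ι : Type*} [Fintype ι] [DecidableEq ι] {n : ι → ℕ}
    (A : Matrix ((i : ι) × Fin (n i)) ((i : ι) × Fin (n i)) ℝ) : Prop :=
  ∃ μ > 0, ∀ B : Matrix ((i : ι) × Fin (n i)) ((i : ι) × Fin (n i)) ℝ,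
    opNorm2 B ≤ μ → BlockDStable (A + B)

section helpers
set_option linter.unusedSectionVars false
set_option linter.unusedVariables false
variable {m : Type*} [Fintype m] [DecidableEq m]

private lemma dot_self_nonneg' (x : m → ℝ) : 0 ≤ x ⬝ᵥ x :=
  Finset.sum_nonneg fun i _ => mul_self_nonneg _

private lemma dot_self_pos' {x : m → ℝ} (hx : x ≠ 0) : 0 < x ⬝ᵥ x := by
  rcases (dot_self_nonneg' x).lt_or_eq with h | h
  · exact h
  · exfalso
    apply hx
    funext i
    have := (Finset.sum_eq_zero_iff_of_nonneg
      (fun i _ => mul_self_nonneg (x i))).mp h.symm i (Finset.mem_univ i)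
    exact mul_self_eq_zero.mp this

private lemma dot_mulVec_le (T : Matrix m m ℝ) (x : m → ℝ) :
    x ⬝ᵥ (T *ᵥ x) ≤ opNorm2 T * (x ⬝ᵥ x) := by
  set x' : EuclideanSpace ℝ m := (WithLp.equiv 2 _).symm x with hx'
  have h1 : x ⬝ᵥ (T *ᵥ x) = inner ℝ x' (Matrix.toEuclideanCLM (𝕜 := ℝ) T x') := by
    rw [EuclideanSpace.inner_eq_star_dotProduct]
    simp [x', Matrix.toLin'_apply, star_trivial, dotProduct_comm]
  have h2 : x ⬝ᵥ x = ‖x'‖ ^ 2 := by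
    rw [← real_inner_self_eq_norm_sq, EuclideanSpace.inner_eq_star_dotProduct]
    simp [x', star_trivial]
  rw [h1, h2]
  calc inner ℝ x' (Matrix.toEuclideanCLM (𝕜 := ℝ) T x')
      ≤ ‖x'‖ * ‖Matrix.toEuclideanCLM (𝕜 := ℝ) T x'‖ := real_inner_le_norm _ _
    _ ≤ ‖x'‖ * (‖Matrix.toEuclideanCLM (𝕜 := ℝ) T‖ * ‖x'‖) := by
        gcongr; exact (Matrix.toEuclideanCLM (𝕜 := ℝ) T).le_opNorm x'
    _ = opNorm2 T * ‖x'‖ ^ 2 := by unfold opNorm2; ring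

private lemma opNorm2_nonneg' (T : Matrix m m ℝ) : 0 ≤ opNorm2 T := norm_nonneg _

private lemma opNorm2_mul_le' (S T : Matrix m m ℝ) :
    opNorm2 (S * T) ≤ opNorm2 S * opNorm2 T := by
  unfold opNorm2
  rw [_root_.map_mul]
  exact norm_mul_le _ _

private lemma star_mulVec_eq' {U : Matrix m m ℝ} (x : m → ℝ) : (star U) *ᵥ x = x ᵥ* U := by
  rw [star_eq_conjTranspose, conjTranspose_eq_transpose_of_trivial, mulVec_transpose]

private lemma eig_lower_bound' {Q : Matrix m m ℝ} (hQ : Q.IsHermitian) (x : m → ℝ) :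
    (⨅ p, hQ.eigenvalues p) * (x ⬝ᵥ x) ≤ x ⬝ᵥ (Q *ᵥ x) := by
  set U : Matrix m m ℝ := ↑(hQ.eigenvectorUnitary) with hU
  have hUU : U * star U = 1 := (Matrix.mem_unitaryGroup_iff).mp hQ.eigenvectorUnitary.2
  set u : m → ℝ := (star U) *ᵥ x with hu
  have hx1 : x ⬝ᵥ (Q *ᵥ x) = u ⬝ᵥ (diagonal (RCLike.ofReal ∘ hQ.eigenvalues) *ᵥ u) := by
    conv_lhs => rw [hQ.spectral_theorem, Unitary.conjStarAlgAut_apply]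
    rw [← mulVec_mulVec, ← mulVec_mulVec, dotProduct_mulVec, hu, star_mulVec_eq']
  have hx2 : u ⬝ᵥ u = x ⬝ᵥ x := by
    rw [hu, dotProduct_mulVec, ← star_mulVec_eq' (U := star U), star_star, mulVec_mulVec, hUU,
      one_mulVec]
  have hb : BddBelow (Set.range hQ.eigenvalues) := (Set.finite_range _).bddBelow
  calc (⨅ p, hQ.eigenvalues p) * (x ⬝ᵥ x) = ∑ i, (⨅ p, hQ.eigenvalues p) * (u i * u i) := by
        rw [← Finset.mul_sum, ← hx2]; rfl
    _ ≤ ∑ i, hQ.eigenvalues i * (u i * u i) := by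
        refine Finset.sum_le_sum fun i _ => ?_
        exact mul_le_mul_of_nonneg_right (ciInf_le hb i) (mul_self_nonneg _)
    _ = u ⬝ᵥ (diagonal (RCLike.ofReal ∘ hQ.eigenvalues) *ᵥ u) := by
        simp only [dotProduct, mulVec_diagonal, Function.comp_apply, RCLike.ofReal_real_eq_id,
          id_eq]
        exact Finset.sum_congr rfl fun i _ => by ring
    _ = x ⬝ᵥ (Q *ᵥ x) := hx1.symm

private lemma exists_eigvec' {S : Matrix m m ℝ} {μ' : ℂ}
    (h : μ' ∈ spectrum ℂ (S.map (algebraMap ℝ ℂ))) :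
    ∃ v : m → ℂ, v ≠ 0 ∧ (S.map (algebraMap ℝ ℂ)) *ᵥ v = μ' • v := by
  rw [spectrum.mem_iff] at h
  have hdet : (algebraMap ℂ (Matrix m m ℂ) μ' - S.map (algebraMap ℝ ℂ)).det = 0 := by
    by_contra hd
    exact h ((Matrix.isUnit_iff_isUnit_det _).mpr (Ne.isUnit hd))
  obtain ⟨v, hv0, hv⟩ := (Matrix.exists_mulVec_eq_zero_iff).mpr hdet
  refine ⟨v, hv0, ?_⟩
  rw [sub_mulVec, sub_eq_zero] at hv
  rw [← hv, Algebra.algebraMap_eq_smul_one, smul_mulVec, one_mulVec]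

end helpers

theorem hurwitz_of_small_perturbation_of_lyapunov
    (N : ℕ) (hN : 0 < N) (n : Fin N → ℕ) (hn : ∀ i, 0 < n i)
    (A Q : Matrix ((i : Fin N) × Fin (n i)) ((i : Fin N) × Fin (n i)) ℝ)
    (hQ : Q.PosDef) (M : ℝ) (hM : 0 < M) (μ : ℝ) (hμ0 : 0 < μ)
    (hμ : μ < (⨅ p, hQ.1.eigenvalues p) / (2 * M))
    (d : Fin N → ℝ) (hd : ∀ i, 0 < d i)
    (P : Matrix ((i : Fin N) × Fin (n i)) ((i : Fin N) × Fin (n i)) ℝ)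
    (hP : P.PosDef)
    (hLyap : Aᵀ * Matrix.diagonal (fun p => d p.1) * P
        + P * Matrix.diagonal (fun p => d p.1) * A = -Q)
    (hbound : opNorm2 (P * Matrix.diagonal (fun p => d p.1)) ≤ M) :
    ∀ B : Matrix ((i : Fin N) × Fin (n i)) ((i : Fin N) × Fin (n i)) ℝ,
      opNorm2 B ≤ μ →
        IsHurwitz (Matrix.diagonal (fun p => d p.1) * (A + B)) := by
  intro B hB μ' hμ'
  set D' : Matrix ((i : Fin N) × Fin (n i)) ((i : Fin N) × Fin (n i)) ℝ :=
    Matrix.diagonal (fun p => d p.1) with hD'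
  set S : Matrix ((i : Fin N) × Fin (n i)) ((i : Fin N) × Fin (n i)) ℝ := D' * (A + B) with hS
  set lam : ℝ := ⨅ p, hQ.1.eigenvalues p with hlam
  obtain ⟨v, hv0, hv⟩ := exists_eigvec' hμ'
  set α := μ'.re with hα
  set β := μ'.im with hβ
  set x : ((i : Fin N) × Fin (n i)) → ℝ := fun j => (v j).re with hx
  set y : ((i : Fin N) × Fin (n i)) → ℝ := fun j => (v j).im with hy
  -- eigen-equations for real and imaginary parts
  have hSx : S *ᵥ x = α • x - β • y := by
    funext j
    have hj := congrArg Complex.re (congrFun hv j)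
    simp only [mulVec, dotProduct, Matrix.map_apply, Complex.re_sum, Complex.mul_re,
      Complex.coe_algebraMap, Complex.ofReal_re, Complex.ofReal_im, zero_mul, sub_zero,
      Pi.smul_apply, smul_eq_mul] at hj
    simpa [mulVec, dotProduct, x, y, α, β, Pi.sub_apply] using hj
  have hSy : S *ᵥ y = β • x + α • y := by
    funext j
    have hj := congrArg Complex.im (congrFun hv j)
    simp only [mulVec, dotProduct, Matrix.map_apply, Complex.im_sum, Complex.mul_im,
      Complex.coe_algebraMap, Complex.ofReal_re, Complex.ofReal_im, zero_mul, add_zero,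
      Pi.smul_apply, smul_eq_mul] at hj
    simp only [mulVec, dotProduct, x, y, α, β, Pi.add_apply, Pi.smul_apply, smul_eq_mul]
    rw [hj]; ring
  -- transpose facts
  have hPt : Pᵀ = P := by
    rw [← conjTranspose_eq_transpose_of_trivial]; exact hP.1
  have hPsym : ∀ a b : ((i : Fin N) × Fin (n i)) → ℝ, a ⬝ᵥ (P *ᵥ b) = b ⬝ᵥ (P *ᵥ a) := by
    intro a b
    rw [dotProduct_mulVec, ← mulVec_transpose, hPt, dotProduct_comm]
  -- Lyapunov identity for the perturbed matrix
  have hkey : Sᵀ * P + P * S = -Q + (Bᵀ * D' * P + P * D' * B) := by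
    have hDt : D'ᵀ = D' := diagonal_transpose _
    have hSt : Sᵀ = (A + B)ᵀ * D' := by rw [hS, transpose_mul, hDt]
    have expand : Sᵀ * P + P * S
        = (Aᵀ * D' * P + P * D' * A) + (Bᵀ * D' * P + P * D' * B) := by
      rw [hSt, hS, transpose_add]
      noncomm_ring
    rw [expand, hLyap]
  -- quadratic-form version of the Lyapunov identity
  have hform : ∀ w : ((i : Fin N) × Fin (n i)) → ℝ, 2 * (w ⬝ᵥ (P *ᵥ (S *ᵥ w)))
      = -(w ⬝ᵥ (Q *ᵥ w)) + 2 * (w ⬝ᵥ ((P * D' * B) *ᵥ w)) := by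
    intro w
    have h1 : w ⬝ᵥ ((Sᵀ * P + P * S) *ᵥ w) = 2 * (w ⬝ᵥ (P *ᵥ (S *ᵥ w))) := by
      rw [add_mulVec, dotProduct_add, ← mulVec_mulVec, ← mulVec_mulVec,
        dotProduct_mulVec w Sᵀ, vecMul_transpose, hPsym (S *ᵥ w) w]
      ring
    have ht : w ⬝ᵥ ((Bᵀ * D' * P) *ᵥ w) = w ⬝ᵥ ((P * D' * B) *ᵥ w) := by
      have htr : (P * D' * B)ᵀ = Bᵀ * D' * P := by
        rw [transpose_mul, transpose_mul, diagonal_transpose, hPt, mul_assoc]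
      rw [← htr, dotProduct_mulVec, vecMul_transpose, dotProduct_comm]
    have h2 : w ⬝ᵥ ((Sᵀ * P + P * S) *ᵥ w)
        = -(w ⬝ᵥ (Q *ᵥ w)) + 2 * (w ⬝ᵥ ((P * D' * B) *ᵥ w)) := by
      rw [hkey, add_mulVec, dotProduct_add, neg_mulVec, dotProduct_neg, add_mulVec,
        dotProduct_add, ht]
      ring
    rw [← h1, h2]
  -- evaluate the left side using the eigen-equations
  have hfx : x ⬝ᵥ (P *ᵥ (S *ᵥ x)) = α * (x ⬝ᵥ (P *ᵥ x)) - β * (x ⬝ᵥ (P *ᵥ y)) := by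
    rw [hSx, mulVec_sub, dotProduct_sub, mulVec_smul, mulVec_smul, dotProduct_smul,
      dotProduct_smul, smul_eq_mul, smul_eq_mul]
  have hfy : y ⬝ᵥ (P *ᵥ (S *ᵥ y)) = β * (y ⬝ᵥ (P *ᵥ x)) + α * (y ⬝ᵥ (P *ᵥ y)) := by
    rw [hSy, mulVec_add, dotProduct_add, mulVec_smul, mulVec_smul, dotProduct_smul,
      dotProduct_smul, smul_eq_mul, smul_eq_mul]
  have hsum : x ⬝ᵥ (P *ᵥ (S *ᵥ x)) + y ⬝ᵥ (P *ᵥ (S *ᵥ y))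
      = α * (x ⬝ᵥ (P *ᵥ x) + y ⬝ᵥ (P *ᵥ y)) := by
    rw [hfx, hfy, hPsym y x]; ring
  -- norm bound on the perturbation term
  have hT : opNorm2 (P * D' * B) ≤ M * μ := by
    calc opNorm2 (P * D' * B) ≤ opNorm2 (P * D') * opNorm2 B := opNorm2_mul_le' _ _
      _ ≤ M * μ := mul_le_mul hbound hB (opNorm2_nonneg' _) hM.le
  have htx : x ⬝ᵥ ((P * D' * B) *ᵥ x) ≤ M * μ * (x ⬝ᵥ x) :=
    le_trans (dot_mulVec_le _ _) (mul_le_mul_of_nonneg_right hT (dot_self_nonneg' _))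
  have hty : y ⬝ᵥ ((P * D' * B) *ᵥ y) ≤ M * μ * (y ⬝ᵥ y) :=
    le_trans (dot_mulVec_le _ _) (mul_le_mul_of_nonneg_right hT (dot_self_nonneg' _))
  -- eigenvalue lower bounds
  have hqx : lam * (x ⬝ᵥ x) ≤ x ⬝ᵥ (Q *ᵥ x) := eig_lower_bound' hQ.1 x
  have hqy : lam * (y ⬝ᵥ y) ≤ y ⬝ᵥ (Q *ᵥ y) := eig_lower_bound' hQ.1 y
  -- nontriviality
  have hxy0 : x ≠ 0 ∨ y ≠ 0 := by
    obtain ⟨j, hj⟩ := Function.ne_iff.mp hv0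
    rcases Classical.em ((v j).re = 0) with hre | hre
    · right
      intro h
      exact hj (Complex.ext hre (congrFun h j))
    · left
      intro h
      exact hre (congrFun h j)
  have hspos : ∀ z : ((i : Fin N) × Fin (n i)) → ℝ, z ≠ 0 → 0 < z ⬝ᵥ (P *ᵥ z) := by
    intro z hz
    have := hP.dotProduct_mulVec_pos hz
    simpa [star_trivial] using this
  have hsnn : ∀ z : ((i : Fin N) × Fin (n i)) → ℝ, 0 ≤ z ⬝ᵥ (P *ᵥ z) := by
    intro z
    have := hP.posSemidef.dotProduct_mulVec_nonneg z
    simpa [star_trivial] using this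
  have hp0 : 0 < x ⬝ᵥ (P *ᵥ x) + y ⬝ᵥ (P *ᵥ y) := by
    rcases hxy0 with h | h
    · have h1 := hspos x h
      have h2 := hsnn y
      linarith
    · have h1 := hspos y h
      have h2 := hsnn x
      linarith
  have hs0 : 0 < x ⬝ᵥ x + y ⬝ᵥ y := by
    rcases hxy0 with h | h
    · have h1 := dot_self_pos' h
      have h2 := dot_self_nonneg' y
      linarith
    · have h1 := dot_self_pos' h
      have h2 := dot_self_nonneg' x
      linarith
  -- the main inequality
  have hlam2 : 2 * M * μ < lam := by
    have h2M : 0 < 2 * M := by linarith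
    have := (lt_div_iff₀ h2M).mp hμ
    linarith
  have hprod : 0 < (lam - 2 * M * μ) * (x ⬝ᵥ x + y ⬝ᵥ y) :=
    mul_pos (by linarith) hs0
  have hEq : 2 * (α * (x ⬝ᵥ (P *ᵥ x) + y ⬝ᵥ (P *ᵥ y)))
      = -(x ⬝ᵥ (Q *ᵥ x)) - (y ⬝ᵥ (Q *ᵥ y))
        + 2 * (x ⬝ᵥ ((P * D' * B) *ᵥ x)) + 2 * (y ⬝ᵥ ((P * D' * B) *ᵥ y)) := by
    have h1 := hform x
    have h2 := hform y
    rw [← hsum]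
    linarith
  have hneg : 2 * (α * (x ⬝ᵥ (P *ᵥ x) + y ⬝ᵥ (P *ᵥ y))) < 0 := by
    rw [hEq]
    nlinarith
  show μ'.re < 0
  by_contra hc
  push_neg at hc
  have hge : 0 ≤ 2 * (α * (x ⬝ᵥ (P *ᵥ x) + y ⬝ᵥ (P *ᵥ y))) := by
    have := mul_nonneg hc hp0.le
    linarith
  linarith
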